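/- Assume in addition that S : X^{++} → ℤ[X] satisfies the Donkin factorization S_ζ = S_{ζ^0+pρ}(S_{ζ^1+pζ^2+⋯})^{(1)} in the appropriate range, that S_{ν+pρ} = S¹_{ν+pρ} for all ν ∈ X^+_red, and that S_ν = S¹_ν for all ν ∈ X^+_red ∩ X^{++}. Then for every k ≥ 0 and every ζ ∈ X^+_k, S_ζ = S^{k+1}_ζ. -/

import Mathlib

open Finset

/-- Base-`p` digit number `k` of a weight `ζ ∈ ℤ^I` (coordinatewise). -/
def digit (p k : ℕ) {I : Type*} (ζ : I → ℤ) : I → ℤ :=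
  fun i => (ζ i / (p : ℤ) ^ k) % (p : ℤ)

/-- The truncated tail `ζ^j + p ζ^{j+1} + p² ζ^{j+2} + ⋯` of the base-`p` expansion. -/
noncomputable def tailFrom (p j : ℕ) {I : Type*} (ζ : I → ℤ) : I → ℤ :=
  fun i => ∑ᶠ k : ℕ, (p : ℤ) ^ k * digit p (j + k) ζ i

/-- Dominant weights `X^+`. -/
def dominant {I : Type*} (ζ : I → ℤ) : Prop := ∀ i, 0 ≤ ζ i

/-- Strictly dominant weights `X^{++} = X^+ + ρ`. -/
def strictDom {I : Type*} (ζ : I → ℤ) : Prop := ∀ i, 1 ≤ ζ i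

/-- `p`-restricted weights `X^+_red`. -/
def restricted (p : ℕ) {I : Type*} (ζ : I → ℤ) : Prop :=
  ∀ i, 0 ≤ ζ i ∧ ζ i ≤ (p : ℤ) - 1

/-- The Weyl vector `ρ` (all coordinates equal to `1` in fundamental weight coordinates). -/
def rho {I : Type*} : I → ℤ := fun _ => 1

/-- The Frobenius twist `ξ ↦ ξ^{(h)}`, sending `e^λ` to `e^{p^h λ}`, as a ring
homomorphism of the group ring `ℤ[X]`, `X = ℤ^I`. -/
noncomputable def twist (p h : ℕ) {I : Type*} :
    AddMonoidAlgebra ℤ (I → ℤ) →+* AddMonoidAlgebra ℤ (I → ℤ) :=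
  AddMonoidAlgebra.mapDomainRingHom ℤ
    (AddMonoidHom.mk' (fun l => ((p : ℤ) ^ h) • l) (fun a b => smul_add _ a b))

/-- The functions `S^h` of no. 4 of the paper, defined inductively from `S¹` by
`S^h_ζ = Σ_{μ ∈ X^{++}} x_{μ, ζ^{h−1}+pζ^h+⋯} · S^{h−1}_{ζ^0+pζ^1+⋯+p^{h−2}ζ^{h−2}+p^{h−1}μ}`,
where `x_{μ,ζ}` are the coefficients of `S¹` in the basis `S⁰` (extended by zero off
`X^{++}`); by convention `S^0 := S¹`. -/
noncomputable def Sh {I : Type*} (p : ℕ) (x : (I → ℤ) → (I → ℤ) → ℤ)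
    (S1 : (I → ℤ) → AddMonoidAlgebra ℤ (I → ℤ)) :
    ℕ → (I → ℤ) → AddMonoidAlgebra ℤ (I → ℤ)
  | 0 => S1
  | 1 => S1
  | (h + 2) => fun ζ => ∑ᶠ μ : I → ℤ, x μ (tailFrom p (h + 1) ζ) •
      Sh p x S1 (h + 1)
        ((∑ j ∈ Finset.range (h + 1), (p : ℤ) ^ j • digit p j ζ) + (p : ℤ) ^ (h + 1) • μ)

/-! ### Auxiliary integer arithmetic lemmas -/

private lemma intDivDiv (a b c : ℤ) (ha : 0 ≤ a) (hb : 0 ≤ b) (hc : 0 ≤ c) :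
    a / b / c = a / (b * c) := by
  lift a to ℕ using ha
  lift b to ℕ using hb
  lift c to ℕ using hc
  rw [← Int.natCast_div, ← Int.natCast_mul, ← Int.natCast_div, ← Int.natCast_div,
    Nat.div_div_eq_div_mul]

private lemma sum_digits (p : ℕ) (hp : 2 ≤ p) :
    ∀ (K : ℕ) (m : ℤ), 0 ≤ m → m < (p : ℤ) ^ K →
      ∑ k ∈ Finset.range K, (p : ℤ) ^ k * (m / (p : ℤ) ^ k % (p : ℤ)) = m := by
  have hp0 : (0 : ℤ) < (p : ℤ) := by exact_mod_cast (by omega : 0 < p)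
  intro K
  induction K with
  | zero =>
    intro m hm hlt
    rw [pow_zero] at hlt
    have : m = 0 := by omega
    simp [this]
  | succ K ih =>
    intro m hm hlt
    have hdiv : ∀ j : ℕ, m / (p : ℤ) ^ (j + 1) = (m / (p : ℤ)) / (p : ℤ) ^ j := by
      intro j
      rw [pow_succ', ← intDivDiv m (p : ℤ) ((p : ℤ) ^ j) hm (le_of_lt hp0) (by positivity)]
    calc ∑ k ∈ Finset.range (K + 1), (p : ℤ) ^ k * (m / (p : ℤ) ^ k % (p : ℤ))
        = (∑ j ∈ Finset.range K, (p : ℤ) ^ (j + 1) * (m / (p : ℤ) ^ (j + 1) % (p : ℤ)))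
            + (p : ℤ) ^ 0 * (m / (p : ℤ) ^ 0 % (p : ℤ)) := Finset.sum_range_succ' _ K
      _ = (p : ℤ) * ∑ j ∈ Finset.range K, (p : ℤ) ^ j * ((m / (p : ℤ)) / (p : ℤ) ^ j % (p : ℤ))
            + m % (p : ℤ) := by
          rw [Finset.mul_sum]
          congr 1
          · refine Finset.sum_congr rfl fun j _ => ?_
            rw [hdiv j, pow_succ']
            ring
          · simp
      _ = (p : ℤ) * (m / (p : ℤ)) + m % (p : ℤ) := by
          rw [ih (m / (p : ℤ)) (Int.ediv_nonneg hm (le_of_lt hp0))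
            ((Int.ediv_lt_iff_lt_mul hp0).mpr (by rw [← pow_succ]; exact hlt))]
      _ = m := Int.mul_ediv_add_emod m (p : ℤ)

private lemma exists_pow_gt (p : ℕ) (hp : 2 ≤ p) (m : ℤ) : ∃ K : ℕ, m < (p : ℤ) ^ K := by
  refine ⟨m.toNat, ?_⟩
  calc m ≤ (m.toNat : ℤ) := Int.self_le_toNat m
    _ < (2 : ℤ) ^ m.toNat := by exact_mod_cast (Nat.lt_two_pow_self (n := m.toNat))
    _ ≤ (p : ℤ) ^ m.toNat := pow_le_pow_left₀ (by norm_num) (by exact_mod_cast hp) _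

private lemma selfdigits (p : ℕ) (hp : 2 ≤ p) (m : ℤ) (hm : 0 ≤ m) :
    ∑ᶠ k : ℕ, (p : ℤ) ^ k * (m / (p : ℤ) ^ k % (p : ℤ)) = m := by
  have hp1 : (1 : ℤ) ≤ (p : ℤ) := by exact_mod_cast (by omega : 1 ≤ p)
  obtain ⟨K, hK⟩ := exists_pow_gt p hp m
  have hsub : (Function.support fun k : ℕ => (p : ℤ) ^ k * (m / (p : ℤ) ^ k % (p : ℤ)))
      ⊆ ↑(Finset.range K) := by
    intro k hk
    simp only [Finset.coe_range, Set.mem_Iio]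
    by_contra hcon
    push_neg at hcon
    apply hk
    have hlt : m < (p : ℤ) ^ k := lt_of_lt_of_le hK (pow_le_pow_right₀ hp1 hcon)
    show (p : ℤ) ^ k * (m / (p : ℤ) ^ k % (p : ℤ)) = 0
    rw [Int.ediv_eq_zero_of_lt hm hlt]
    simp
  rw [finsum_eq_sum_of_support_subset _ hsub]
  exact sum_digits p hp K m hm hK

private lemma lt_pow_of_digits_zero (p : ℕ) (hp : 2 ≤ p) (m : ℤ) (hm : 0 ≤ m) (k : ℕ)
    (hz : ∀ j, k < j → m / (p : ℤ) ^ j % (p : ℤ) = 0) : m < (p : ℤ) ^ (k + 1) := by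
  have hp1 : (1 : ℤ) ≤ (p : ℤ) := by exact_mod_cast (by omega : 1 ≤ p)
  by_contra hcon
  push_neg at hcon
  obtain ⟨K, hK⟩ := exists_pow_gt p hp m
  have hex : ∃ J : ℕ, m < (p : ℤ) ^ J := ⟨K, hK⟩
  classical
  have hJ : m < (p : ℤ) ^ Nat.find hex := Nat.find_spec hex
  have hJ0 : Nat.find hex ≠ 0 := by
    intro h0
    rw [h0, pow_zero] at hJ
    have h1 : (0 : ℤ) + 1 ≤ (p : ℤ) ^ (k + 1) := Int.lt_iff_add_one_le.mp (by positivity)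
    linarith
  obtain ⟨j, hj⟩ := Nat.exists_eq_succ_of_ne_zero hJ0
  have hjle : ¬ m < (p : ℤ) ^ j := Nat.find_min hex (by omega)
  push_neg at hjle
  have hJ' : m < (p : ℤ) ^ (j + 1) := by rw [hj] at hJ; exact hJ
  have hkj : k < j := by
    by_contra hkj
    push_neg at hkj
    have : (p : ℤ) ^ (j + 1) ≤ (p : ℤ) ^ (k + 1) := pow_le_pow_right₀ hp1 (by omega)
    linarith
  have h1 : 1 ≤ m / (p : ℤ) ^ j :=
    (Int.le_ediv_iff_mul_le (by positivity)).mpr (by rw [one_mul]; exact hjle)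
  have h2 : m / (p : ℤ) ^ j < (p : ℤ) :=
    (Int.ediv_lt_iff_lt_mul (by positivity)).mpr (by rw [← pow_succ']; exact hJ')
  have h3 := hz j hkj
  rw [Int.emod_eq_of_lt (by linarith) h2] at h3
  linarith

/-! ### Vector-level lemmas -/

private lemma tailFrom_eq_ediv (p : ℕ) (hp : 2 ≤ p) (j : ℕ) {I : Type*} (ζ : I → ℤ)
    (hζ : dominant ζ) : tailFrom p j ζ = fun i => ζ i / (p : ℤ) ^ j := by
  funext i
  show ∑ᶠ k : ℕ, (p : ℤ) ^ k * digit p (j + k) ζ i = ζ i / (p : ℤ) ^ j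
  have hkey : ∀ k : ℕ, digit p (j + k) ζ i
      = (ζ i / (p : ℤ) ^ j) / (p : ℤ) ^ k % (p : ℤ) := by
    intro k
    show ζ i / (p : ℤ) ^ (j + k) % (p : ℤ) = _
    rw [pow_add, ← intDivDiv (ζ i) _ _ (hζ i) (by positivity) (by positivity)]
  rw [finsum_congr fun k => by rw [hkey k]]
  exact selfdigits p hp _ (Int.ediv_nonneg (hζ i) (by positivity))

private lemma dominant_tailFrom (p : ℕ) (hp : 2 ≤ p) (j : ℕ) {I : Type*} (ζ : I → ℤ)
    (hζ : dominant ζ) : dominant (tailFrom p j ζ) := by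
  rw [tailFrom_eq_ediv p hp j ζ hζ]
  intro i
  exact Int.ediv_nonneg (hζ i) (by positivity)

private lemma digit_tailFrom_one (p : ℕ) (hp : 2 ≤ p) {I : Type*} (ζ : I → ℤ)
    (hζ : dominant ζ) (j : ℕ) :
    digit p j (tailFrom p 1 ζ) = digit p (j + 1) ζ := by
  funext i
  rw [tailFrom_eq_ediv p hp 1 ζ hζ]
  show (ζ i / (p : ℤ) ^ 1) / (p : ℤ) ^ j % (p : ℤ) = ζ i / (p : ℤ) ^ (j + 1) % (p : ℤ)
  rw [intDivDiv (ζ i) _ _ (hζ i) (by positivity) (by positivity), ← pow_add, add_comm 1 j]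

private lemma tailFrom_tailFrom (p : ℕ) (hp : 2 ≤ p) {I : Type*} (ζ : I → ℤ)
    (hζ : dominant ζ) (h : ℕ) :
    tailFrom p h (tailFrom p 1 ζ) = tailFrom p (h + 1) ζ := by
  have h1 : dominant (tailFrom p 1 ζ) := dominant_tailFrom p hp 1 ζ hζ
  rw [tailFrom_eq_ediv p hp h _ h1, tailFrom_eq_ediv p hp 1 ζ hζ,
    tailFrom_eq_ediv p hp (h + 1) ζ hζ]
  funext i
  dsimp only
  rw [intDivDiv (ζ i) _ _ (hζ i) (by positivity) (by positivity), ← pow_add, add_comm 1 h]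

private lemma arg_decomp (p : ℕ) (hp : 2 ≤ p) {I : Type*} (ζ μ : I → ℤ) (h : ℕ) (i : I) :
    ((∑ j ∈ Finset.range (h + 1), (p : ℤ) ^ j • digit p j ζ) + (p : ℤ) ^ (h + 1) • μ) i
      = ζ i % (p : ℤ)
        + (p : ℤ) * (((∑ j ∈ Finset.range h, (p : ℤ) ^ j • digit p (j + 1) ζ)
            + (p : ℤ) ^ h • μ) i) := by
  simp only [Pi.add_apply, Finset.sum_apply, Pi.smul_apply, smul_eq_mul]
  have hsum : ∑ j ∈ Finset.range (h + 1), (p : ℤ) ^ j * digit p j ζ i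
      = digit p 0 ζ i + (p : ℤ) * ∑ j ∈ Finset.range h, (p : ℤ) ^ j * digit p (j + 1) ζ i := by
    rw [Finset.sum_range_succ', Finset.mul_sum]
    have : ∀ j ∈ Finset.range h,
        (p : ℤ) ^ (j + 1) * digit p (j + 1) ζ i = (p : ℤ) * ((p : ℤ) ^ j * digit p (j + 1) ζ i) := by
      intro j _
      rw [pow_succ']
      ring
    rw [Finset.sum_congr rfl this]
    simp [add_comm]
  rw [hsum]
  have hd0 : digit p 0 ζ i = ζ i % (p : ℤ) := by
    show ζ i / (p : ℤ) ^ 0 % (p : ℤ) = ζ i % (p : ℤ)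
    rw [pow_zero, Int.ediv_one]
  rw [hd0, pow_succ']
  ring

private lemma dominant_arg (p : ℕ) (hp : 2 ≤ p) {I : Type*} (ζ μ : I → ℤ)
    (hμ : dominant μ) (n m : ℕ) :
    dominant ((∑ j ∈ Finset.range n, (p : ℤ) ^ j • digit p j ζ) + (p : ℤ) ^ m • μ) := by
  have hpne : (p : ℤ) ≠ 0 := by positivity
  intro i
  simp only [Pi.add_apply, Finset.sum_apply, Pi.smul_apply, smul_eq_mul]
  have h1 : (0 : ℤ) ≤ ∑ j ∈ Finset.range n, (p : ℤ) ^ j * digit p j ζ i :=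
    Finset.sum_nonneg fun j _ => mul_nonneg (by positivity) (Int.emod_nonneg _ hpne)
  exact add_nonneg h1 (mul_nonneg (by positivity) (hμ i))

private lemma strict_arg (p : ℕ) (hp : 2 ≤ p) {I : Type*} (ζ μ : I → ℤ)
    (hμ : strictDom μ) (n m : ℕ) :
    strictDom ((∑ j ∈ Finset.range n, (p : ℤ) ^ j • digit p (j + 1) ζ) + (p : ℤ) ^ m • μ) := by
  have hpne : (p : ℤ) ≠ 0 := by positivity
  intro i
  simp only [Pi.add_apply, Finset.sum_apply, Pi.smul_apply, smul_eq_mul]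
  have h1 : (0 : ℤ) ≤ ∑ j ∈ Finset.range n, (p : ℤ) ^ j * digit p (j + 1) ζ i :=
    Finset.sum_nonneg fun j _ => mul_nonneg (by positivity) (Int.emod_nonneg _ hpne)
  have h2 : (1 : ℤ) ≤ (p : ℤ) ^ m := one_le_pow₀ (by exact_mod_cast (by omega : 1 ≤ p))
  have h3 : (1 : ℤ) * 1 ≤ (p : ℤ) ^ m * μ i :=
    mul_le_mul h2 (hμ i) zero_le_one (by positivity)
  rw [one_mul] at h3
  exact le_add_of_nonneg_of_le h1 h3

private lemma digit_zero_arg (p : ℕ) (hp : 2 ≤ p) {I : Type*} (ζ μ : I → ℤ) (h : ℕ) :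
    digit p 0 ((∑ j ∈ Finset.range (h + 1), (p : ℤ) ^ j • digit p j ζ)
        + (p : ℤ) ^ (h + 1) • μ) = digit p 0 ζ := by
  funext i
  show ((∑ j ∈ Finset.range (h + 1), (p : ℤ) ^ j • digit p j ζ)
      + (p : ℤ) ^ (h + 1) • μ) i / (p : ℤ) ^ 0 % (p : ℤ) = ζ i / (p : ℤ) ^ 0 % (p : ℤ)
  rw [pow_zero, Int.ediv_one, Int.ediv_one, arg_decomp p hp ζ μ h i,
    Int.add_mul_emod_self_left, Int.emod_emod_of_dvd _ dvd_rfl]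

private lemma tail_arg (p : ℕ) (hp : 2 ≤ p) {I : Type*} (ζ μ : I → ℤ)
    (hμ : dominant μ) (h : ℕ) :
    tailFrom p 1 ((∑ j ∈ Finset.range (h + 1), (p : ℤ) ^ j • digit p j ζ)
        + (p : ℤ) ^ (h + 1) • μ)
      = (∑ j ∈ Finset.range h, (p : ℤ) ^ j • digit p (j + 1) ζ) + (p : ℤ) ^ h • μ := by
  have hpne : (p : ℤ) ≠ 0 := by positivity
  have hp0 : (0 : ℤ) < (p : ℤ) := by positivity
  rw [tailFrom_eq_ediv p hp 1 _ (dominant_arg p hp ζ μ hμ (h + 1) (h + 1))]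
  funext i
  show ((∑ j ∈ Finset.range (h + 1), (p : ℤ) ^ j • digit p j ζ)
      + (p : ℤ) ^ (h + 1) • μ) i / (p : ℤ) ^ 1 = _
  rw [pow_one, arg_decomp p hp ζ μ h i, Int.add_mul_ediv_left _ _ hpne,
    Int.ediv_eq_zero_of_lt (Int.emod_nonneg _ hpne) (Int.emod_lt_of_pos _ hp0), zero_add]

/-! ### Algebraic lemmas about `twist` and finite sums -/

private lemma twist_finsum {I : Type*} (p h : ℕ) {α : Type*}
    (f : α → AddMonoidAlgebra ℤ (I → ℤ)) (hf : (Function.support f).Finite) :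
    twist p h (∑ᶠ a, f a) = ∑ᶠ a, twist p h (f a) :=
  AddMonoidHom.map_finsum (twist p h).toAddMonoidHom hf

private lemma twist_zsmul {I : Type*} (p h : ℕ) (n : ℤ) (a : AddMonoidAlgebra ℤ (I → ℤ)) :
    twist p h (n • a) = n • twist p h a := by
  have := map_intCast_smul (twist p h (I := I)) ℤ ℤ n a
  simpa using this

private lemma pull {I : Type*} (p : ℕ) (x : (I → ℤ) → (I → ℤ) → ℤ)
    (hxfin : ∀ ζ : I → ℤ, (Function.support fun μ => x μ ζ).Finite)
    (t : I → ℤ) (C : AddMonoidAlgebra ℤ (I → ℤ))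
    (F : (I → ℤ) → AddMonoidAlgebra ℤ (I → ℤ)) :
    C * twist p 1 (∑ᶠ μ : I → ℤ, x μ t • F μ)
      = ∑ᶠ μ : I → ℤ, x μ t • (C * twist p 1 (F μ)) := by
  have hsub : ∀ (G : (I → ℤ) → AddMonoidAlgebra ℤ (I → ℤ)),
      (Function.support fun μ => x μ t • G μ).Finite := by
    intro G
    apply (hxfin t).subset
    intro μ hμ
    simp only [Function.mem_support, ne_eq] at hμ ⊢
    intro h0
    exact hμ (by rw [h0, zero_smul])
  rw [twist_finsum p 1 _ (hsub F),
    finsum_congr fun μ => twist_zsmul p 1 (x μ t) (F μ),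
    mul_finsum' _ _ (hsub fun μ => twist p 1 (F μ))]
  exact finsum_congr fun μ => mul_smul_comm (x μ t) C (twist p 1 (F μ))

private lemma Sh_one {I : Type*} (p : ℕ) (x : (I → ℤ) → (I → ℤ) → ℤ)
    (S1 : (I → ℤ) → AddMonoidAlgebra ℤ (I → ℤ)) : Sh p x S1 1 = S1 := rfl

private lemma Sh_two {I : Type*} (p : ℕ) (x : (I → ℤ) → (I → ℤ) → ℤ)
    (S1 : (I → ℤ) → AddMonoidAlgebra ℤ (I → ℤ)) (h : ℕ) (ζ : I → ℤ) :
    Sh p x S1 (h + 2) ζ = ∑ᶠ μ : I → ℤ, x μ (tailFrom p (h + 1) ζ) •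
      Sh p x S1 (h + 1)
        ((∑ j ∈ Finset.range (h + 1), (p : ℤ) ^ j • digit p j ζ) + (p : ℤ) ^ (h + 1) • μ) :=
  rfl

/-! ### The key factorization of `S^h` -/

private lemma shfact {I : Type*} (p : ℕ) (hp : 2 ≤ p)
    (x : (I → ℤ) → (I → ℤ) → ℤ)
    (S0 S1 : (I → ℤ) → AddMonoidAlgebra ℤ (I → ℤ))
    (hxfin : ∀ ζ : I → ℤ, (Function.support fun μ => x μ ζ).Finite)
    (hxsupp : ∀ μ ζ : I → ℤ, x μ ζ ≠ 0 → strictDom μ)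
    (hx : ∀ ζ : I → ℤ, strictDom ζ → S1 ζ = ∑ᶠ μ : I → ℤ, x μ ζ • S0 μ)
    (hfact1 : ∀ ζ : I → ℤ, dominant ζ → strictDom (tailFrom p 1 ζ) →
      S1 ζ = S1 (digit p 0 ζ + (p : ℤ) • rho) * twist p 1 (S0 (tailFrom p 1 ζ))) :
    ∀ (h : ℕ) (ζ : I → ℤ), dominant ζ → strictDom (tailFrom p 1 ζ) →
      Sh p x S1 (h + 2) ζ
        = S1 (digit p 0 ζ + (p : ℤ) • rho)
            * twist p 1 (Sh p x S1 (h + 1) (tailFrom p 1 ζ)) := by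
  intro h
  induction h with
  | zero =>
    intro ζ hζ hstrict
    rw [Sh_two p x S1 0 ζ]
    simp only [zero_add, Sh_one]
    rw [hx _ hstrict,
      pull p x hxfin (tailFrom p 1 ζ) (S1 (digit p 0 ζ + (p : ℤ) • rho)) S0]
    refine finsum_congr fun μ => ?_
    by_cases hμ0 : x μ (tailFrom p 1 ζ) = 0
    · rw [hμ0, zero_smul, zero_smul]
    · have hsd : strictDom μ := hxsupp _ _ hμ0
      have hdomμ : dominant μ := fun i => le_trans zero_le_one (hsd i)
      have htail : tailFrom p 1
          ((∑ j ∈ Finset.range 1, (p : ℤ) ^ j • digit p j ζ) + (p : ℤ) ^ 1 • μ)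
            = μ := by
        have h0 := tail_arg p hp ζ μ hdomμ 0
        simp only [zero_add, Finset.range_zero, Finset.sum_empty, pow_zero, one_smul] at h0
        exact h0
      have hd0 := digit_zero_arg p hp ζ μ 0
      simp only [zero_add] at hd0
      congr 1
      rw [hfact1 _ (dominant_arg p hp ζ μ hdomμ 1 1)
        (by rw [htail]; exact hsd), htail, hd0]
  | succ h ih =>
    intro ζ hζ hstrict
    have hηdom : dominant (tailFrom p 1 ζ) := dominant_tailFrom p hp 1 ζ hζ
    rw [Sh_two p x S1 (h + 1) ζ, Sh_two p x S1 h (tailFrom p 1 ζ)]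
    have hdigs : ∀ j : ℕ, digit p j (tailFrom p 1 ζ) = digit p (j + 1) ζ :=
      digit_tailFrom_one p hp ζ hζ
    simp only [tailFrom_tailFrom p hp ζ hζ, hdigs]
    rw [pull p x hxfin (tailFrom p (h + 1 + 1) ζ) (S1 (digit p 0 ζ + (p : ℤ) • rho))
      (fun μ => Sh p x S1 (h + 1)
        ((∑ j ∈ Finset.range (h + 1), (p : ℤ) ^ j • digit p (j + 1) ζ) + (p : ℤ) ^ (h + 1) • μ))]
    refine finsum_congr fun μ => ?_
    by_cases hμ0 : x μ (tailFrom p (h + 1 + 1) ζ) = 0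
    · rw [hμ0, zero_smul, zero_smul]
    · have hsd : strictDom μ := hxsupp _ _ hμ0
      have hdomμ : dominant μ := fun i => le_trans zero_le_one (hsd i)
      have htail := tail_arg p hp ζ μ hdomμ (h + 1)
      have hargdom := dominant_arg p hp ζ μ hdomμ (h + 1 + 1) (h + 1 + 1)
      have hargstrict : strictDom (tailFrom p 1
          ((∑ j ∈ Finset.range (h + 1 + 1), (p : ℤ) ^ j • digit p j ζ)
            + (p : ℤ) ^ (h + 1 + 1) • μ)) := by
        rw [htail]
        exact strict_arg p hp ζ μ hsd (h + 1) (h + 1)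
      congr 1
      rw [ih _ hargdom hargstrict, htail, digit_zero_arg p hp ζ μ (h + 1)]

/-! ### Miscellaneous -/

private lemma pow_le_of_digit (p : ℕ) (hp : 2 ≤ p) {I : Type*} (ζ : I → ℤ)
    (hζ : dominant ζ) (j : ℕ) (hd : strictDom (digit p j ζ)) (i : I) :
    (p : ℤ) ^ j ≤ ζ i := by
  have h1 : 1 ≤ ζ i / (p : ℤ) ^ j % (p : ℤ) := hd i
  have h0 : 0 ≤ ζ i / (p : ℤ) ^ j := Int.ediv_nonneg (hζ i) (by positivity)
  have h2 : 1 ≤ ζ i / (p : ℤ) ^ j := by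
    rcases lt_or_eq_of_le h0 with hlt | heq
    · linarith [Int.lt_iff_add_one_le.mp hlt]
    · rw [← heq] at h1
      simp at h1
  calc (p : ℤ) ^ j = 1 * (p : ℤ) ^ j := (one_mul _).symm
    _ ≤ ζ i := (Int.le_ediv_iff_mul_le (by positivity)).mp h2

/-- Proposition 7 of the paper: assume in addition that
`S : X^{++} → ℤ[X]` satisfies the Donkin factorization, that `S_{ν+pρ} = S¹_{ν+pρ}` for
all `ν ∈ X^+_red` (6(a)), and `S_ν = S¹_ν` for all `ν ∈ X^+_red ∩ X^{++}` (6(b)).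
Then for every `k ≥ 0` and every `ζ ∈ X^+_k`, `S_ζ = S^{k+1}_ζ`. -/
theorem prop7 {I : Type*} [Fintype I] (p : ℕ) (hp : 2 ≤ p)
    (x : (I → ℤ) → (I → ℤ) → ℤ)
    (S S0 S1 : (I → ℤ) → AddMonoidAlgebra ℤ (I → ℤ))
    (hS0 : LinearIndependent ℤ (fun μ : {μ : I → ℤ // strictDom μ} => S0 μ.1))
    (hxfin : ∀ ζ : I → ℤ, (Function.support fun μ => x μ ζ).Finite)
    (hxsupp : ∀ μ ζ : I → ℤ, x μ ζ ≠ 0 → strictDom μ)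
    (hx : ∀ ζ : I → ℤ, strictDom ζ → S1 ζ = ∑ᶠ μ : I → ℤ, x μ ζ • S0 μ)
    (hfact1 : ∀ ζ : I → ℤ, dominant ζ → strictDom (tailFrom p 1 ζ) →
      S1 ζ = S1 (digit p 0 ζ + (p : ℤ) • rho) * twist p 1 (S0 (tailFrom p 1 ζ)))
    (hdonkin : ∀ lam nu mu : I → ℤ, dominant lam → restricted p nu → dominant mu →
      lam + rho = nu + (p : ℤ) • (mu + rho) →
      S (lam + rho) = S (nu + (p : ℤ) • rho) * twist p 1 (S (mu + rho)))
    (h6a : ∀ nu : I → ℤ, restricted p nu → S (nu + (p : ℤ) • rho) = S1 (nu + (p : ℤ) • rho))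
    (h6b : ∀ nu : I → ℤ, restricted p nu → strictDom nu → S nu = S1 nu)
    (k : ℕ) (ζ : I → ℤ) (hζ : dominant ζ)
    (htop : strictDom (digit p k ζ))
    (hzero : ∀ j, k < j → digit p j ζ = 0) :
    S ζ = Sh p x S1 (k + 1) ζ := by
  have hpz : (2 : ℤ) ≤ (p : ℤ) := by exact_mod_cast hp
  have hpne : (p : ℤ) ≠ 0 := by positivity
  have hp0 : (0 : ℤ) < (p : ℤ) := by linarith
  induction k generalizing ζ with
  | zero =>
    have hlt : ∀ i, ζ i < (p : ℤ) := by
      intro i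
      have h := lt_pow_of_digits_zero p hp (ζ i) (hζ i) 0 (fun j hj => by
        have h2 := congrFun (hzero j hj) i
        simp only [Pi.zero_apply] at h2
        exact h2)
      simpa using h
    have hdig : digit p 0 ζ = ζ := by
      funext i
      show ζ i / (p : ℤ) ^ 0 % (p : ℤ) = ζ i
      rw [pow_zero, Int.ediv_one, Int.emod_eq_of_lt (hζ i) (hlt i)]
    have hres : restricted p ζ := fun i => ⟨hζ i, by
      have h1 := Int.lt_iff_add_one_le.mp (hlt i)
      linarith⟩
    rw [hdig] at htop
    rw [h6b ζ hres htop]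
    rw [zero_add, Sh_one]
  | succ k ih =>
    have hηdom : dominant (tailFrom p 1 ζ) := dominant_tailFrom p hp 1 ζ hζ
    have hηdiv : tailFrom p 1 ζ = fun i => ζ i / (p : ℤ) ^ 1 :=
      tailFrom_eq_ediv p hp 1 ζ hζ
    have hge : ∀ i, (p : ℤ) ^ (k + 1) ≤ ζ i := pow_le_of_digit p hp ζ hζ (k + 1) htop
    have hζstrict : strictDom ζ := fun i =>
      le_trans (one_le_pow₀ (by linarith)) (hge i)
    have hηstrict : strictDom (tailFrom p 1 ζ) := by
      rw [hηdiv]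
      intro i
      refine (Int.le_ediv_iff_mul_le (by positivity)).mpr ?_
      rw [one_mul, pow_one]
      calc (p : ℤ) = (p : ℤ) ^ 1 := (pow_one _).symm
        _ ≤ (p : ℤ) ^ (k + 1) := pow_le_pow_right₀ (by linarith) (by omega)
        _ ≤ ζ i := hge i
    have hηdig : ∀ j : ℕ, digit p j (tailFrom p 1 ζ) = digit p (j + 1) ζ :=
      digit_tailFrom_one p hp ζ hζ
    have hηtop : strictDom (digit p k (tailFrom p 1 ζ)) := by rw [hηdig k]; exact htop
    have hηzero : ∀ j, k < j → digit p j (tailFrom p 1 ζ) = 0 := fun j hj => by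
      rw [hηdig j]; exact hzero (j + 1) (by omega)
    have hSη := ih (tailFrom p 1 ζ) hηdom hηtop hηzero
    -- the Donkin factorization applied to ζ
    have hnu : restricted p (digit p 0 ζ) := by
      intro i
      have h1 := Int.lt_iff_add_one_le.mp (Int.emod_lt_of_pos (ζ i / (p : ℤ) ^ 0) hp0)
      have h2 := Int.emod_nonneg (ζ i / (p : ℤ) ^ 0) hpne
      refine ⟨h2, ?_⟩
      show ζ i / (p : ℤ) ^ 0 % (p : ℤ) ≤ (p : ℤ) - 1
      linarith
    have hlamdom : dominant (ζ - rho) := fun i => by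
      simp only [Pi.sub_apply, rho]
      linarith [hζstrict i]
    have hmudom : dominant ((fun i => ζ i / (p : ℤ) ^ 1) - rho) := fun i => by
      simp only [Pi.sub_apply, rho]
      have := hηstrict i
      rw [hηdiv] at this
      simp only at this
      linarith
    have heqn : ζ - rho + rho
        = digit p 0 ζ + (p : ℤ) • ((fun i => ζ i / (p : ℤ) ^ 1) - rho + rho) := by
      funext i
      simp only [Pi.add_apply, Pi.sub_apply, Pi.smul_apply, smul_eq_mul, rho]
      have hsub1 : ζ i - 1 + 1 = ζ i := by ring
      have hsub2 : ζ i / (p : ℤ) ^ 1 - 1 + 1 = ζ i / (p : ℤ) ^ 1 := by ring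
      rw [hsub1, hsub2]
      show ζ i = ζ i / (p : ℤ) ^ 0 % (p : ℤ) + (p : ℤ) * (ζ i / (p : ℤ) ^ 1)
      rw [pow_zero, pow_one, Int.ediv_one]
      exact (Int.emod_add_mul_ediv (ζ i) (p : ℤ)).symm
    have hdk := hdonkin (ζ - rho) (digit p 0 ζ) ((fun i => ζ i / (p : ℤ) ^ 1) - rho)
      hlamdom hnu hmudom heqn
    have heq1 : ζ - rho + rho = ζ := by funext i; simp
    have heq2 : (fun i => ζ i / (p : ℤ) ^ 1) - rho + rho = tailFrom p 1 ζ := by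
      rw [hηdiv]; funext i; simp
    rw [heq1, heq2] at hdk
    rw [h6a _ hnu, hSη] at hdk
    show S ζ = Sh p x S1 (k + 2) ζ
    rw [shfact p hp x S0 S1 hxfin hxsupp hx hfact1 k ζ hζ hηstrict]
    exact hdk
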